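/- Let G be a strongly connected digraph and let s be an arbitrary fixed vertex of G. An edge e=(u,v) of G is a strong bridge of G if and only if (u,v) is a bridge of the flow graph G_s, or (v,u) is a bridge of the reverse flow graph G_s^R, or both. -/

import Mathlib

/-!  Basic notions for finite directed graphs given by an edge set `E : Set (V × V)`. -/

variable {V : Type*}

/-- A path from `u` to `v`: a nonempty list of vertices starting at `u`, ending at `v`,
in which every pair of consecutive vertices is an edge. -/
def IsPath (E : Set (V × V)) (u v : V) (p : List V) : Prop :=
  p.Chain' (fun a b => (a, b) ∈ E) ∧ p.head? = some u ∧ p.getLast? = some v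

/-- `v` is reachable from `u` by a path. -/
def Reach (E : Set (V × V)) (u v : V) : Prop := ∃ p, IsPath E u v p

/-- Every vertex reaches every other vertex. -/
def StronglyConnected (E : Set (V × V)) : Prop := ∀ u v, Reach E u v

/-- An edge `e` is a strong bridge if its removal destroys strong connectivity. -/
def StrongBridge (E : Set (V × V)) (e : V × V) : Prop :=
  e ∈ E ∧ ¬ StronglyConnected (E \ {e})

/-- `u` dominates `v` in the flow graph with start vertex `s`:
every path from `s` to `v` contains `u`. -/
def Dominates (E : Set (V × V)) (s u v : V) : Prop :=
  ∀ p, IsPath E s v p → u ∈ p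

/-- An edge `e = (e.1, e.2)` is a bridge of the flow graph `G_s`:
every path from `s` to `e.2` contains the edge `e`. -/
def FlowBridge (E : Set (V × V)) (s : V) (e : V × V) : Prop :=
  e ∈ E ∧ ∀ p, IsPath E s e.2 p → [e.1, e.2] <:+: p

/-- The reverse digraph: all edges reversed. -/
def rev (E : Set (V × V)) : Set (V × V) := {e | (e.2, e.1) ∈ E}

/-- `D(v)`: the set of vertices dominated by `v` in `G_s`. -/
def Dset (E : Set (V × V)) (s v : V) : Set V := {w | Dominates E s v w}

/-- Reachability inside the induced subgraph `G[S]`: a path all of whose vertices lie in `S`. -/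
def ReachableIn (E : Set (V × V)) (S : Set V) (u v : V) : Prop :=
  ∃ p, IsPath E u v p ∧ ∀ w ∈ p, w ∈ S

/-- `C` is a strongly connected component of the induced subgraph `G[S]`. -/
def SCCIn (E : Set (V × V)) (S : Set V) (C : Set V) : Prop :=
  C.Nonempty ∧ C ⊆ S ∧
  (∀ u ∈ C, ∀ v ∈ C, ReachableIn E S u v) ∧
  (∀ v ∈ S, ∀ u ∈ C, ReachableIn E S u v → ReachableIn E S v u → v ∈ C)

/-- A bridge-dominated component: an SCC of `G[D(v)]` for some bridge `(u,v)` of `G_s`. -/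
def BridgeDomComponent (E : Set (V × V)) (s : V) (C : Set V) : Prop :=
  ∃ u v, FlowBridge E s (u, v) ∧ SCCIn E (Dset E s v) C

/-- The set of edges used by a path `p`. -/
def pathEdges (p : List V) : Set (V × V) := {e | [e.1, e.2] <:+: p}

/-- `u` and `v` are `2`-edge-connected: there are two edge-disjoint paths from `u` to `v`
and two edge-disjoint paths from `v` to `u`. -/
def TwoEdgeConnected (E : Set (V × V)) (u v : V) : Prop :=
  (∃ p q, IsPath E u v p ∧ IsPath E u v q ∧ pathEdges p ∩ pathEdges q = ∅) ∧
  (∃ p q, IsPath E v u p ∧ IsPath E v u q ∧ pathEdges p ∩ pathEdges q = ∅)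

/-- `u` is the immediate dominator of `v` in `G_s`: a proper dominator of `v`
dominated by every proper dominator of `v`. -/
def ImmDom (E : Set (V × V)) (s u v : V) : Prop :=
  Dominates E s u v ∧ u ≠ v ∧
  ∀ w, Dominates E s w v → w ≠ v → Dominates E s w u

/-- `depth v = |Dom(v)|`, the number of dominators of `v` in `G_s`. -/
noncomputable def depth (E : Set (V × V)) (s v : V) : ℕ :=
  {u | Dominates E s u v}.ncard

/-- `z` is the nearest common ancestor of `x` and `y` in the dominator tree of `G_s`:
a common dominator of `x` and `y` dominated by every common dominator. -/
def IsNCA (E : Set (V × V)) (s x y z : V) : Prop :=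
  Dominates E s z x ∧ Dominates E s z y ∧
  ∀ w, Dominates E s w x → Dominates E s w y → Dominates E s w z

/-- `r` is the bridge-decomposition root of `v` in `G_s`: the deepest dominator `r`
of `v` such that `r = s` or `(d(r), r)` is a bridge of `G_s`. -/
def IsBDRoot (E : Set (V × V)) (s v r : V) : Prop :=
  Dominates E s r v ∧
  (r = s ∨ ∃ u, ImmDom E s u r ∧ FlowBridge E s (u, r)) ∧
  ∀ r', Dominates E s r' v →
    (r' = s ∨ ∃ u', ImmDom E s u' r' ∧ FlowBridge E s (u', r')) →
    Dominates E s r' r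

section stmt0aux
variable {V : Type*}
open Relation List

private lemma path_cons' {E : Set (V × V)} {u w v : V} {p : List V}
    (h : (u, w) ∈ E) (hp : IsPath E w v p) : IsPath E u v (u :: p) := by
  obtain ⟨hc, hh, hl⟩ := hp
  refine ⟨?_, rfl, ?_⟩
  · unfold List.Chain'
    rw [List.isChain_cons]
    refine ⟨fun b hb => ?_, hc⟩
    rw [hh] at hb; cases hb; exact h
  · cases p with
    | nil => simp at hh
    | cons b t => rw [List.getLast?_cons_cons]; exact hl

private lemma isPath_rtg {E : Set (V × V)} :
    ∀ (p : List V) (u v : V), IsPath E u v p →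
      ReflTransGen (fun a b => (a, b) ∈ E) u v := by
  intro p
  induction p with
  | nil => rintro u v ⟨_, hh, _⟩; simp at hh
  | cons a t ih =>
    rintro u v ⟨hc, hh, hl⟩
    simp only [List.head?_cons, Option.some.injEq] at hh
    subst hh
    cases t with
    | nil =>
      simp only [List.getLast?_singleton, Option.some.injEq] at hl
      subst hl; exact ReflTransGen.refl
    | cons b t' =>
      unfold List.Chain' at hc
      rw [List.isChain_cons_cons] at hc
      rw [List.getLast?_cons_cons] at hl
      exact ReflTransGen.head hc.1 (ih b v ⟨hc.2, rfl, hl⟩)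

private lemma rtg_reach {E : Set (V × V)} {u v : V}
    (h : ReflTransGen (fun a b => (a, b) ∈ E) u v) : Reach E u v := by
  induction h using ReflTransGen.head_induction_on with
  | refl => exact ⟨[v], List.isChain_singleton v, rfl, rfl⟩
  | head hab _ ih => obtain ⟨p, hp⟩ := ih; exact ⟨_ :: p, path_cons' hab hp⟩

private lemma isPath_mono {E E' : Set (V × V)} (hEE : E ⊆ E') {u v : V} {p : List V}
    (h : IsPath E u v p) : IsPath E' u v p :=
  ⟨List.IsChain.imp (fun a b hab => hEE hab) h.1, h.2.1, h.2.2⟩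

private lemma chain'_avoid {E : Set (V × V)} {e : V × V} :
    ∀ p : List V, p.Chain' (fun a b => (a, b) ∈ E) → ¬ ([e.1, e.2] <:+: p) →
      p.Chain' (fun a b => (a, b) ∈ E \ {e})
  | [], _, _ => List.isChain_nil
  | [a], _, _ => List.isChain_singleton a
  | a :: b :: t, hc, hni => by
    unfold List.Chain' at hc ⊢
    rw [List.isChain_cons_cons] at hc ⊢
    refine ⟨⟨hc.1, fun he => ?_⟩, chain'_avoid (b :: t) hc.2 fun hinf => ?_⟩
    · rw [Set.mem_singleton_iff] at he
      apply hni
      rw [← he]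
      exact ⟨[], t, by simp⟩
    · exact hni (hinf.trans (List.suffix_cons a (b :: t)).isInfix)

private lemma isPath_reverse' {E : Set (V × V)} {u v : V} {p : List V}
    (h : IsPath E u v p) : IsPath (rev E) v u p.reverse := by
  obtain ⟨hc, hh, hl⟩ := h
  refine ⟨?_, by rw [List.head?_reverse]; exact hl, by rw [List.getLast?_reverse]; exact hh⟩
  unfold List.Chain' at hc ⊢
  rw [List.isChain_reverse]
  exact hc.imp fun a b hab => hab

private lemma rev_rev' (E : Set (V × V)) : rev (rev E) = E := rfl

private lemma rtg_lift' {r r' : V → V → Prop} (h : ∀ a b, r a b → ReflTransGen r' a b)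
    {u v : V} (hr : ReflTransGen r u v) : ReflTransGen r' u v := by
  induction hr with
  | refl => exact ReflTransGen.refl
  | tail _ hbc ih => exact ih.trans (h _ _ hbc)

end stmt0aux


/-- an edge `(u,v)` of a strongly connected digraph `G` is a strong
bridge iff it is a bridge of `G_s` or `(v,u)` is a bridge of `G_s^R` (or both). -/
theorem stmt0 {V : Type*} (E : Set (V × V)) (s u v : V)
    (hSC : StronglyConnected E) (hE : (u, v) ∈ E) :
    StrongBridge E (u, v) ↔
      FlowBridge E s (u, v) ∨ FlowBridge (rev E) s (v, u) := by
  constructor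
  · rintro ⟨hmem, hnsc⟩
    by_contra hcon
    push_neg at hcon
    obtain ⟨h1, h2⟩ := hcon
    apply hnsc
    simp only [FlowBridge, not_and, not_forall] at h1 h2
    obtain ⟨p1, hp1, hi1⟩ := h1 hmem
    obtain ⟨q, hq, hi2⟩ := h2 (show (v, u) ∈ rev E from hE)
    have hp1' : IsPath (E \ {(u, v)}) s v p1 :=
      ⟨chain'_avoid (e := (u, v)) p1 hp1.1 hi1, hp1.2.1, hp1.2.2⟩
    have hq' : IsPath (rev (rev E)) u s q.reverse := isPath_reverse' hq
    rw [rev_rev'] at hq'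
    have hnir : ¬ ([(u, v).1, (u, v).2] <:+: q.reverse) := by
      intro hinf
      apply hi2
      have := (List.reverse_infix (l₁ := [v, u]) (l₂ := q)).mp (by simpa using hinf)
      simpa using this
    have hq'' : IsPath (E \ {(u, v)}) u s q.reverse :=
      ⟨chain'_avoid (e := (u, v)) _ hq'.1 hnir, hq'.2.1, hq'.2.2⟩
    have huv : Relation.ReflTransGen (fun a b => (a, b) ∈ E \ {(u, v)}) u v :=
      (isPath_rtg _ _ _ hq'').trans (isPath_rtg _ _ _ hp1')
    intro x y
    obtain ⟨p, hp⟩ := hSC x y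
    refine rtg_reach (rtg_lift' ?_ (isPath_rtg p x y hp))
    intro a b hab
    by_cases hcase : (a, b) = ((u, v) : V × V)
    · rw [Prod.mk.injEq] at hcase
      obtain ⟨rfl, rfl⟩ := hcase
      exact huv
    · exact Relation.ReflTransGen.single ⟨hab, hcase⟩
  · rintro (⟨hmem, hall⟩ | ⟨hmem, hall⟩)
    · refine ⟨hE, fun hsc => ?_⟩
      obtain ⟨p, hp⟩ := hsc s v
      have hinf := hall p (isPath_mono Set.diff_subset hp)
      have h2 := hp.1.infix hinf
      rw [List.isChain_pair] at h2
      exact h2.2 rfl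
    · refine ⟨hE, fun hsc => ?_⟩
      obtain ⟨p, hp⟩ := hsc u s
      have hp' : IsPath (rev (E \ {(u, v)})) s u p.reverse := isPath_reverse' hp
      have hinf := hall p.reverse (isPath_mono (fun e he => he.1) hp')
      have h2 := hp'.1.infix hinf
      rw [List.isChain_pair] at h2
      exact h2.2 rfl
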